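/- Let X_k be uniform on [0,k] for k = 1,...,n with n ≥ 4, and take s = 1. Then the BRS-equation solution is t(n,1) = √(2/H_n) where H_n is the n-th harmonic number, and consequently E[N(n,1)] ≤ √(2·H_n). -/

import Mathlib

open MeasureTheory ProbabilityTheory Finset Set
open scoped Classical ENNReal

/-- Deterministic BRS counting bound: for any feasible set `A` (with sum at most `1`),
`|A| ≤ |B| + (1 - ∑_{i ∈ B} x i)/t` where `B = {i : x i ≤ t}`. -/
lemma brs_card_bound {n : ℕ} (x : Fin n → ℝ) {t : ℝ} (ht0 : 0 < t)
    (A : Finset (Fin n)) (hA : ∑ i ∈ A, x i ≤ 1) :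
    (A.card : ℝ) ≤ ((Finset.univ.filter (fun k => x k ≤ t)).card : ℝ)
      + (1 - ∑ i ∈ Finset.univ.filter (fun k => x k ≤ t), x i) / t := by
  set B := Finset.univ.filter (fun k => x k ≤ t) with hB
  have hsA : ∑ i ∈ A ∩ B, x i + ∑ i ∈ A \ B, x i = ∑ i ∈ A, x i :=
    Finset.sum_inter_add_sum_sdiff A B x
  have hsB : ∑ i ∈ B ∩ A, x i + ∑ i ∈ B \ A, x i = ∑ i ∈ B, x i :=
    Finset.sum_inter_add_sum_sdiff B A x
  rw [Finset.inter_comm B A] at hsB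
  have hcA : (A ∩ B).card + (A \ B).card = A.card := Finset.card_inter_add_card_sdiff A B
  have hcB : (B ∩ A).card + (B \ A).card = B.card := Finset.card_inter_add_card_sdiff B A
  rw [Finset.inter_comm B A] at hcB
  have hD : ((A \ B).card : ℝ) * t ≤ ∑ i ∈ A \ B, x i := by
    have := Finset.card_nsmul_le_sum (A \ B) x t (fun i hi => by
      have h2 := (Finset.mem_sdiff.mp hi).2
      simp only [hB, Finset.mem_filter, Finset.mem_univ, true_and] at h2
      linarith [not_le.mp h2])
    simpa [nsmul_eq_mul] using this
  have hE : ∑ i ∈ B \ A, x i ≤ ((B \ A).card : ℝ) * t := by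
    have := Finset.sum_le_card_nsmul (B \ A) x t (fun i hi => by
      have h1 := (Finset.mem_sdiff.mp hi).1
      simp only [hB, Finset.mem_filter, Finset.mem_univ, true_and] at h1
      exact h1)
    simpa [nsmul_eq_mul] using this
  have hcA' : ((A ∩ B).card : ℝ) + ((A \ B).card : ℝ) = A.card := by exact_mod_cast hcA
  have hcB' : ((A ∩ B).card : ℝ) + ((B \ A).card : ℝ) = B.card := by exact_mod_cast hcB
  have key : ((A.card : ℝ) - B.card) * t ≤ 1 - ∑ i ∈ B, x i := by
    have hdiff : (A.card : ℝ) - B.card = ((A \ B).card : ℝ) - ((B \ A).card : ℝ) := by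
      linarith
    rw [hdiff, sub_mul]
    linarith
  have := (le_div_iff₀ ht0).mpr key
  linarith

/-- Increasing uniform supports: if `X k` is uniform on `[0,k]`, `k = 1, …, n`,
`n ≥ 4`, and `s = 1`, then `t = √(2/H_n)` solves the BRS-equation
`∑ k, ∫_0^t x dF_k(x) = 1` (where `H_n` is the `n`-th harmonic number), and
consequently `E[N(n,1)] ≤ √(2 H_n)`. -/
theorem brs_uniform_increasing_supports
    {Ω : Type*} [MeasureSpace Ω] [IsProbabilityMeasure (ℙ : Measure Ω)]
    (n : ℕ) (hn : 4 ≤ n)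
    (X : Fin n → Ω → ℝ) (hXmeas : ∀ k, Measurable (X k))
    (hlaw : ∀ k : Fin n, Measure.map (X k) ℙ =
      ((k.1 + 1 : ℝ≥0∞))⁻¹ • volume.restrict (Icc (0:ℝ) (k.1 + 1)))
    (H t : ℝ)
    (hH : H = ∑ k ∈ Finset.range n, (1 : ℝ) / (k + 1))
    (ht : t = Real.sqrt (2 / H))
    (N : Ω → ℕ)
    (hN : ∀ ω, N ω = ((Finset.univ.powerset.filter
      (fun A : Finset (Fin n) => ∑ i ∈ A, X i ω ≤ 1)).sup Finset.card)) :
    (∑ k : Fin n, ∫ x in Ioc (0:ℝ) t, x ∂(Measure.map (X k) ℙ)) = 1 ∧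
    ∫ ω, (N ω : ℝ) ≤ Real.sqrt (2 * H) := by
  -- Basic facts about H and t
  have hHsum : ∑ k : Fin n, (1:ℝ)/(k.1+1) = H := by
    rw [hH]; exact Fin.sum_univ_eq_sum_range (fun i => (1:ℝ)/(i+1)) n
  have hH2 : (2:ℝ) < H := by
    have hsub : ∑ k ∈ Finset.range 4, (1:ℝ)/(k+1) ≤ ∑ k ∈ Finset.range n, (1:ℝ)/(k+1) :=
      Finset.sum_le_sum_of_subset_of_nonneg (Finset.range_subset_range.mpr hn)
        (fun i _ _ => by positivity)
    have h4 : ∑ k ∈ Finset.range 4, (1:ℝ)/(k+1) = 25/12 := by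
      norm_num [Finset.sum_range_succ]
    rw [hH]; linarith
  have hHpos : (0:ℝ) < H := by linarith
  have ht0 : 0 < t := by
    rw [ht]; exact Real.sqrt_pos.mpr (by positivity)
  have ht1 : t ≤ 1 := by
    rw [ht]
    have : (2:ℝ)/H ≤ 1 := (div_le_one hHpos).mpr (by linarith)
    calc Real.sqrt (2/H) ≤ Real.sqrt 1 := Real.sqrt_le_sqrt this
      _ = 1 := Real.sqrt_one
  have ht2 : t ^ 2 = 2 / H := by rw [ht]; exact Real.sq_sqrt (by positivity)
  -- auxiliary facts per k
  have hcne : ∀ k : Fin n, ((k.1 + 1 : ℝ≥0∞))⁻¹ ≠ ⊤ := by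
    intro k
    simp [ENNReal.inv_ne_top]
  have hctr : ∀ k : Fin n, ((k.1 + 1 : ℝ≥0∞))⁻¹.toReal = 1 / (k.1 + 1 : ℝ) := by
    intro k
    rw [ENNReal.toReal_inv, ENNReal.toReal_add (by simp) (by simp)]
    simp
  have hIcc : ∀ k : Fin n, Iic t ∩ Icc (0:ℝ) (k.1+1) = Icc (0:ℝ) t := by
    intro k
    ext y
    simp only [Set.mem_inter_iff, Set.mem_Iic, Set.mem_Icc]
    constructor
    · rintro ⟨h1, h2, _⟩; exact ⟨h2, h1⟩
    · rintro ⟨h1, h2⟩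
      refine ⟨h2, h1, ?_⟩
      have hk : (0:ℝ) ≤ k.1 := Nat.cast_nonneg _
      linarith
  have hIoc : ∀ k : Fin n, Ioc (0:ℝ) t ∩ Icc (0:ℝ) (k.1+1) = Ioc (0:ℝ) t := by
    intro k
    apply Set.inter_eq_left.mpr
    intro y hy
    have hk : (0:ℝ) ≤ k.1 := Nat.cast_nonneg _
    exact ⟨le_of_lt hy.1, by linarith [hy.2]⟩
  have hIocInt : ∫ x in Ioc (0:ℝ) t, x = t ^ 2 / 2 := by
    rw [← intervalIntegral.integral_of_le ht0.le, _root_.integral_id]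
    ring
  -- Part 1: the per-k BRS integral
  have hint1 : ∀ k : Fin n,
      ∫ x in Ioc (0:ℝ) t, x ∂(Measure.map (X k) ℙ) = (1/(k.1+1 : ℝ)) * (t^2/2) := by
    intro k
    rw [hlaw k, Measure.restrict_smul, integral_smul_measure,
      Measure.restrict_restrict measurableSet_Ioc, hIoc k, hIocInt, hctr k]
    simp [smul_eq_mul]
  have hone : H * (t^2/2) = 1 := by
    rw [ht2]; field_simp
  have part1 : (∑ k : Fin n, ∫ x in Ioc (0:ℝ) t, x ∂(Measure.map (X k) ℙ)) = 1 := by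
    calc (∑ k : Fin n, ∫ x in Ioc (0:ℝ) t, x ∂(Measure.map (X k) ℙ))
        = ∑ k : Fin n, (1/(k.1+1 : ℝ)) * (t^2/2) :=
          Finset.sum_congr rfl (fun k _ => hint1 k)
      _ = (∑ k : Fin n, (1/(k.1+1 : ℝ))) * (t^2/2) := by rw [Finset.sum_mul]
      _ = H * (t^2/2) := by rw [hHsum]
      _ = 1 := hone
  -- Part 2
  -- integrability of the indicator functions
  have Iφ : ∀ k : Fin n, Integrable (fun ω => if X k ω ≤ t then (1:ℝ) else 0) ℙ := by
    intro k
    have hms : MeasurableSet {ω | X k ω ≤ t} := (hXmeas k) measurableSet_Iic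
    have heq : (fun ω => if X k ω ≤ t then (1:ℝ) else 0)
        = Set.indicator {ω | X k ω ≤ t} (fun _ => 1) := by
      funext ω; simp [Set.indicator_apply, Set.mem_setOf_eq]
    rw [heq]
    exact (integrable_const 1).indicator hms
  have hfmeas : Measurable ((Set.Iic t).indicator (id : ℝ → ℝ)) :=
    measurable_id.indicator measurableSet_Iic
  have hcomp : ∀ k : Fin n, (fun ω => if X k ω ≤ t then X k ω else 0)
      = ((Set.Iic t).indicator (id : ℝ → ℝ)) ∘ (X k) := by
    intro k; funext ω
    simp [Function.comp, Set.indicator_apply, Set.mem_Iic]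
  have hcomp' : ∀ k : Fin n, (fun ω => if X k ω ≤ t then X k ω else 0)
      = fun ω => ((Set.Iic t).indicator (id : ℝ → ℝ)) (X k ω) := by
    intro k; funext ω
    simp [Set.indicator_apply, Set.mem_Iic]
  have Iψmap : ∀ k : Fin n,
      Integrable ((Set.Iic t).indicator (id : ℝ → ℝ)) (Measure.map (X k) ℙ) := by
    intro k
    rw [hlaw k]
    refine Integrable.smul_measure ?_ (hcne k)
    exact (continuous_id.integrableOn_Icc).indicator measurableSet_Iic
  have Iψ : ∀ k : Fin n, Integrable (fun ω => if X k ω ≤ t then X k ω else 0) ℙ := by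
    intro k
    rw [hcomp k]
    exact (integrable_map_measure hfmeas.aestronglyMeasurable
      (hXmeas k).aemeasurable).mp (Iψmap k)
  -- the expected values
  have hEφ : ∀ k : Fin n, ∫ ω, (if X k ω ≤ t then (1:ℝ) else 0) = t * (1/(k.1+1 : ℝ)) := by
    intro k
    have heq : (fun ω => if X k ω ≤ t then (1:ℝ) else 0)
        = fun ω => ((Set.Iic t).indicator (fun _ => (1:ℝ))) (X k ω) := by
      funext ω; simp [Set.indicator_apply, Set.mem_Iic]
    have hgm : Measurable ((Set.Iic t).indicator (fun _ => (1:ℝ))) :=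
      (measurable_const).indicator measurableSet_Iic
    rw [heq, ← integral_map (hXmeas k).aemeasurable hgm.aestronglyMeasurable,
      hlaw k, integral_smul_measure, integral_indicator measurableSet_Iic,
      Measure.restrict_restrict measurableSet_Iic, hIcc k, setIntegral_const,
      hctr k]
    rw [Real.volume_real_Icc_of_le ht0.le]
    simp [ENNReal.toReal_ofReal ht0.le, smul_eq_mul]
    ring
  have hEψ : ∀ k : Fin n,
      ∫ ω, (if X k ω ≤ t then X k ω else 0) = (1/(k.1+1 : ℝ)) * (t^2/2) := by
    intro k
    rw [hcomp' k, ← integral_map (hXmeas k).aemeasurable hfmeas.aestronglyMeasurable,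
      hlaw k, integral_smul_measure, integral_indicator measurableSet_Iic,
      Measure.restrict_restrict measurableSet_Iic, hIcc k]
    have : ∫ x in Icc (0:ℝ) t, (id x : ℝ) = t^2/2 := by
      rw [integral_Icc_eq_integral_Ioc]
      simpa using hIocInt
    rw [this, hctr k]
    simp [smul_eq_mul]
  have IS : Integrable (fun ω =>
      (1 - ∑ k : Fin n, (if X k ω ≤ t then X k ω else 0)) / t) ℙ := by
    have h := ((integrable_const (1:ℝ)).sub
      (integrable_finset_sum Finset.univ (fun k (_ : k ∈ Finset.univ) => Iψ k))).div_const t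
    simpa using h
  have IF : Integrable (fun ω => ∑ k : Fin n, (if X k ω ≤ t then (1:ℝ) else 0)) ℙ :=
    integrable_finset_sum Finset.univ (fun k _ => Iφ k)
  have Ig : Integrable (fun ω => (∑ k : Fin n, (if X k ω ≤ t then (1:ℝ) else 0))
      + (1 - ∑ k : Fin n, (if X k ω ≤ t then X k ω else 0)) / t) ℙ := IF.add IS
  -- pointwise bound
  have hpt : ∀ ω, (N ω : ℝ) ≤ (∑ k : Fin n, (if X k ω ≤ t then (1:ℝ) else 0))
      + (1 - ∑ k : Fin n, (if X k ω ≤ t then X k ω else 0)) / t := by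
    intro ω
    have hsum1 : ∑ k : Fin n, (if X k ω ≤ t then (1:ℝ) else 0)
        = ((Finset.univ.filter (fun k => X k ω ≤ t)).card : ℝ) := by
      simp [Finset.sum_boole]
    have hsum2 : ∑ k : Fin n, (if X k ω ≤ t then X k ω else 0)
        = ∑ i ∈ Finset.univ.filter (fun k => X k ω ≤ t), X i ω :=
      (Finset.sum_filter _ _).symm
    have hne : (Finset.univ.powerset.filter
        (fun A : Finset (Fin n) => ∑ i ∈ A, X i ω ≤ 1)).Nonempty :=
      ⟨∅, Finset.mem_filter.mpr ⟨Finset.empty_mem_powerset _, by simp⟩⟩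
    obtain ⟨A, hAmem, hAsup⟩ := Finset.exists_mem_eq_sup _ hne Finset.card
    have hAfeas : ∑ i ∈ A, X i ω ≤ 1 := (Finset.mem_filter.mp hAmem).2
    have hNA : N ω = A.card := by rw [hN ω, hAsup]
    have hb := brs_card_bound (fun k => X k ω) ht0 A hAfeas
    rw [hsum1, hsum2, hNA]
    exact hb
  -- integrate the bound
  have hEg : ∫ ω, ((∑ k : Fin n, (if X k ω ≤ t then (1:ℝ) else 0))
      + (1 - ∑ k : Fin n, (if X k ω ≤ t then X k ω else 0)) / t) = t * H := by
    rw [integral_add IF IS, integral_div, integral_sub (integrable_const 1)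
      (integrable_finset_sum Finset.univ (fun k _ => Iψ k)),
      integral_finset_sum Finset.univ (fun k _ => Iφ k),
      integral_finset_sum Finset.univ (fun k _ => Iψ k)]
    have e1 : ∑ k : Fin n, ∫ ω, (if X k ω ≤ t then (1:ℝ) else 0) = t * H := by
      calc ∑ k : Fin n, ∫ ω, (if X k ω ≤ t then (1:ℝ) else 0)
          = ∑ k : Fin n, t * (1/(k.1+1 : ℝ)) := Finset.sum_congr rfl (fun k _ => hEφ k)
        _ = t * ∑ k : Fin n, (1/(k.1+1 : ℝ)) := by rw [Finset.mul_sum]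
        _ = t * H := by rw [hHsum]
    have e2 : ∑ k : Fin n, ∫ ω, (if X k ω ≤ t then X k ω else 0) = 1 := by
      calc ∑ k : Fin n, ∫ ω, (if X k ω ≤ t then X k ω else 0)
          = ∑ k : Fin n, (1/(k.1+1 : ℝ)) * (t^2/2) :=
            Finset.sum_congr rfl (fun k _ => hEψ k)
        _ = (∑ k : Fin n, (1/(k.1+1 : ℝ))) * (t^2/2) := by rw [Finset.sum_mul]
        _ = H * (t^2/2) := by rw [hHsum]
        _ = 1 := hone
    rw [e1, e2]
    simp
  have hfinal : t * H = Real.sqrt (2 * H) := by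
    have h1 : t * H = Real.sqrt (2/H) * Real.sqrt (H^2) := by
      rw [ht, Real.sqrt_sq hHpos.le]
    rw [h1, ← Real.sqrt_mul (by positivity)]
    congr 1
    field_simp
  refine ⟨part1, ?_⟩
  calc ∫ ω, (N ω : ℝ)
      ≤ ∫ ω, ((∑ k : Fin n, (if X k ω ≤ t then (1:ℝ) else 0))
        + (1 - ∑ k : Fin n, (if X k ω ≤ t then X k ω else 0)) / t) := by
        apply integral_mono_of_nonneg
        · exact Filter.Eventually.of_forall (fun ω => by positivity)
        · exact Ig
        · exact Filter.Eventually.of_forall hpt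
    _ = t * H := hEg
    _ = Real.sqrt (2 * H) := hfinal
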